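/- Let F : ℂ → ℂ be a map of the form F(z) = z + φ(z) (or z + conj(φ(z))) where φ is 1-Lipschitz and satisfies |φ(z') - φ(z)| ≤ κ·|z' - z| whenever |z' - z| ≥ δ, for some κ < 1. Then for every z and r ≥ δ, the image of the disc B(z, r) under F satisfies B(F(z), (1-κ)r) ⊆ F(B(z,r)) ⊆ B(F(z), (1+κ)r). -/

import Mathlib

open Metric Filter Topology

private lemma contract_surj (c : NNReal) (hc : c < 1) (ψ : ℂ → ℂ)
    (hψ : LipschitzWith c ψ) (y : ℂ) : ∃ w : ℂ, w + ψ w = y := by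
  have hL : LipschitzWith c (fun w => y - ψ w) := by
    intro a b
    simpa [edist_sub_left] using hψ a b
  have hC : ContractingWith c (fun w => y - ψ w) := ⟨hc, hL⟩
  refine ⟨hC.fixedPoint, ?_⟩
  have h := hC.fixedPoint_isFixedPt
  rw [Function.IsFixedPt] at h
  linear_combination -h

theorem stmt8 (φ : ℂ → ℂ) (κ δ : ℝ) (hκ : κ < 1) (hδ : 0 < δ)
    (hlip : LipschitzWith 1 φ)
    (hLip : ∀ z z' : ℂ, δ ≤ dist z z' → dist (φ z) (φ z') ≤ κ * dist z z')
    (F : ℂ → ℂ) (hF : ∀ z, F z = z + φ z) (z : ℂ) (r : ℝ) (hr : δ ≤ r) :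
    Metric.closedBall (F z) ((1 - κ) * r) ⊆ F '' Metric.closedBall z r ∧
    F '' Metric.closedBall z r ⊆ Metric.closedBall (F z) ((1 + κ) * r) := by
  have h1κ : 0 < 1 - κ := by linarith
  have hκ0 : 0 ≤ κ := by
    have hdzz : dist z (z + (δ : ℂ)) = δ := by
      rw [dist_eq_norm]
      simp [abs_of_pos hδ]
    have h := hLip z (z + (δ : ℂ)) (le_of_eq hdzz.symm)
    rw [hdzz] at h
    nlinarith [dist_nonneg (x := φ z) (y := φ (z + (δ : ℂ)))]
  constructor
  · -- lower inclusion
    intro y hy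
    rw [Metric.mem_closedBall] at hy
    set β : ℕ → ℝ := fun n => 1 / (n + 1) with hβdef
    have hβpos : ∀ n, 0 < β n := fun n => by positivity
    have hβle : ∀ n, β n ≤ 1 := by
      intro n
      rw [hβdef]
      rw [div_le_one (by positivity)]
      simp
    set α : ℕ → ℝ := fun n => 1 - β n with hαdef
    have hα0 : ∀ n, 0 ≤ α n := fun n => by simp [hαdef]; exact hβle n
    have hα1 : ∀ n, α n < 1 := fun n => by simp [hαdef]; exact hβpos n
    have hψ : ∀ n, LipschitzWith ⟨α n, hα0 n⟩ (fun u => ((α n : ℝ) : ℂ) * φ u) := by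
      intro n
      apply LipschitzWith.of_dist_le_mul
      intro a b
      have hl := hlip.dist_le_mul a b
      simp only [NNReal.coe_one, one_mul] at hl
      have : dist (((α n : ℝ) : ℂ) * φ a) (((α n : ℝ) : ℂ) * φ b) = α n * dist (φ a) (φ b) := by
        rw [dist_eq_norm, dist_eq_norm, ← mul_sub, norm_mul, Complex.norm_real,
          Real.norm_of_nonneg (hα0 n)]
      rw [this]
      show α n * dist (φ a) (φ b) ≤ α n * dist a b
      exact mul_le_mul_of_nonneg_left hl (hα0 n)
    have hex : ∀ n, ∃ w, w + ((α n : ℝ) : ℂ) * φ w = y := by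
      intro n
      refine contract_surj ⟨α n, hα0 n⟩ ?_ _ (hψ n) y
      exact_mod_cast hα1 n
    choose w hw using hex
    have hM : 0 ≤ ‖φ z‖ / (1 - κ) := by positivity
    have key : ∀ n, dist (w n) z ≤ r + β n * (‖φ z‖ / (1 - κ)) := by
      intro n
      have hβM : 0 ≤ β n * (‖φ z‖ / (1 - κ)) := by positivity
      rcases le_or_gt δ (dist (w n) z) with hge | hlt
      · have hφn : dist (φ z) (φ (w n)) ≤ κ * dist z (w n) :=
          hLip z (w n) (by rwa [dist_comm])
        rw [dist_comm z (w n)] at hφn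
        have hcast : ((α n : ℝ) : ℂ) = 1 - ((β n : ℝ) : ℂ) := by
          simp [hαdef]
        have hdec : w n - z = (y - F z) + ((α n : ℝ) : ℂ) * (φ z - φ (w n))
            + ((β n : ℝ) : ℂ) * φ z := by
          rw [hF]
          have h := hw n
          rw [hcast] at h ⊢
          linear_combination h
        have hnorm : dist (w n) z ≤ ‖y - F z‖ + α n * dist (φ z) (φ (w n))
            + β n * ‖φ z‖ := by
          rw [dist_eq_norm, hdec]
          refine le_trans (norm_add₃_le) ?_
          gcongr
          · rw [norm_mul, Complex.norm_real, Real.norm_of_nonneg (hα0 n), dist_eq_norm]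
          · rw [norm_mul, Complex.norm_real, Real.norm_of_nonneg (le_of_lt (hβpos n))]
        have hyF : ‖y - F z‖ ≤ (1 - κ) * r := by rwa [← dist_eq_norm]
        have hαβ : α n = 1 - β n := rfl
        have hαle : α n ≤ 1 := by linarith [hβpos n]
        have hκd : 0 ≤ κ * dist (w n) z := by positivity
        have h2 : α n * dist (φ z) (φ (w n)) ≤ κ * dist (w n) z := by
          nlinarith [dist_nonneg (x := φ z) (y := φ (w n)), hα0 n]
        have hMeq : β n * (‖φ z‖ / (1 - κ)) * (1 - κ) = β n * ‖φ z‖ := by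
          field_simp
        have hfin : (1 - κ) * dist (w n) z ≤ (1 - κ) * (r + β n * (‖φ z‖ / (1 - κ))) := by
          nlinarith [hβpos n, norm_nonneg (φ z)]
        exact le_of_mul_le_mul_left hfin h1κ
      · have h1 : dist (w n) z ≤ r := le_trans hlt.le hr
        linarith
    have hball : ∀ n, w n ∈ Metric.closedBall z (r + ‖φ z‖ / (1 - κ)) := by
      intro n
      rw [Metric.mem_closedBall]
      have h1 := key n
      have h2 : β n * (‖φ z‖ / (1 - κ)) ≤ ‖φ z‖ / (1 - κ) := by
        nlinarith [hβpos n, hβle n]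
      linarith
    obtain ⟨p, hpmem, g, hg, hgt⟩ :=
      (isCompact_closedBall z (r + ‖φ z‖ / (1 - κ))).tendsto_subseq hball
    have hβt : Tendsto (fun k => β (g k)) atTop (𝓝 0) := by
      have h0 : Tendsto β atTop (𝓝 0) := tendsto_one_div_add_atTop_nhds_zero_nat
      exact h0.comp hg.tendsto_atTop
    have hαt : Tendsto (fun k => ((α (g k) : ℝ) : ℂ)) atTop (𝓝 1) := by
      have h1 : Tendsto (fun k => α (g k)) atTop (𝓝 1) := by
        simpa [hαdef] using (tendsto_const_nhds.sub hβt :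
          Tendsto (fun k => 1 - β (g k)) atTop (𝓝 (1 - 0)))
      have h2 := (Complex.continuous_ofReal.tendsto 1).comp h1
      simpa [Function.comp_def] using h2
    have hφt : Tendsto (fun k => φ (w (g k))) atTop (𝓝 (φ p)) :=
      (hlip.continuous.tendsto p).comp hgt
    have hyt : Tendsto (fun k => w (g k) + ((α (g k) : ℝ) : ℂ) * φ (w (g k)))
        atTop (𝓝 (p + 1 * φ p)) := hgt.add (hαt.mul hφt)
    have hyconst : Tendsto (fun _ : ℕ => y) atTop (𝓝 (p + 1 * φ p)) := by
      have : (fun k : ℕ => y) = fun k => w (g k) + ((α (g k) : ℝ) : ℂ) * φ (w (g k)) := by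
        funext k
        exact (hw (g k)).symm
      rw [this]
      exact hyt
    have hFp : F p = y := by
      have := tendsto_nhds_unique hyconst tendsto_const_nhds
      rw [hF]
      rw [← this]
      ring
    have hpr : dist p z ≤ r := by
      have h1 : Tendsto (fun k => dist (w (g k)) z) atTop (𝓝 (dist p z)) :=
        hgt.dist tendsto_const_nhds
      have h2 : Tendsto (fun k => r + β (g k) * (‖φ z‖ / (1 - κ))) atTop
          (𝓝 (r + 0 * (‖φ z‖ / (1 - κ)))) :=
        tendsto_const_nhds.add (hβt.mul tendsto_const_nhds)
      have := le_of_tendsto_of_tendsto' h1 h2 (fun k => key (g k))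
      simpa using this
    exact ⟨p, Metric.mem_closedBall.2 hpr, hFp⟩
  · -- upper inclusion
    rintro _ ⟨u, hu, rfl⟩
    rw [Metric.mem_closedBall] at hu ⊢
    have hd : dist (F u) (F z) ≤ dist u z + dist (φ u) (φ z) := by
      rw [hF u, hF z]
      exact dist_add_add_le u (φ u) z (φ z)
    rcases le_or_gt δ (dist u z) with hge | hlt
    · have h1 := hLip u z hge
      nlinarith [dist_nonneg (x := u) (y := z)]
    · by_cases huz : u = z
      · subst huz
        simp only [dist_self]
        nlinarith
      · set d := dist u z with hddef
        have hdpos : 0 < d := dist_pos.2 huz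
        set c : ℂ := z + ((δ / d : ℝ) : ℂ) * (u - z) with hcdef
        have hdn : d = ‖u - z‖ := dist_eq_norm u z
        have hcz : dist c z = δ := by
          rw [hcdef, dist_eq_norm]
          have : z + ((δ / d : ℝ) : ℂ) * (u - z) - z = ((δ / d : ℝ) : ℂ) * (u - z) := by ring
          rw [this, norm_mul, Complex.norm_real, ← hdn,
            Real.norm_of_nonneg (by positivity)]
          field_simp
        have hcu : dist c u = δ - d := by
          rw [hcdef, dist_eq_norm]
          have : z + ((δ / d : ℝ) : ℂ) * (u - z) - u = ((δ / d - 1 : ℝ) : ℂ) * (u - z) := by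
            push_cast
            ring
          have h01 : (0:ℝ) ≤ δ / d - 1 := by
            have := (one_le_div hdpos).2 hlt.le
            linarith
          rw [this, norm_mul, Complex.norm_real, ← hdn, Real.norm_of_nonneg h01]
          field_simp
        have h1 : dist (φ c) (φ z) ≤ κ * δ := by
          have := hLip c z (le_of_eq hcz.symm)
          rwa [hcz] at this
        have h2 : dist (φ u) (φ c) ≤ δ - d := by
          have hl := hlip.dist_le_mul u c
          rw [dist_comm u c, hcu] at hl
          simpa using hl
        have h3 : dist (φ u) (φ z) ≤ (δ - d) + κ * δ :=
          le_trans (dist_triangle (φ u) (φ c) (φ z)) (by linarith)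
        nlinarith
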